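/- Let L₁ be the Laplacian matrix of a graph on c vertices and L₂ the Laplacian matrix of a graph on m vertices, and let N = [[L₁ + m·I_c, −J], [−Jᵀ, L₂ + c·I_m]], where J is the c×m all-ones matrix (N is the Laplacian matrix of the join of the two graphs). If x, y ∈ ℝ^c satisfy 𝟙ᵀx = 𝟙ᵀy = 0 and exp(i·τ·L₁)·x = γ·y for some τ > 0 and γ ∈ ℂ with |γ| = 1, then there exists γ' ∈ ℂ with |γ'| = 1 (namely γ' = e^{imτ}·γ) such that exp(i·τ·N)·(x, 0) = γ'·(y, 0). In particular, Laplacian pair state transfer in a summand orthogonal to 𝟙 persists in the join at the same time. -/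

import Mathlib

open Matrix

/-- The transition matrix `U_R(t) = exp(i·t·R)` of a real square matrix `R`,
as a complex matrix. -/
noncomputable def U {ι : Type*} [Fintype ι] [DecidableEq ι]
    (R : Matrix ι ι ℝ) (t : ℝ) : Matrix ι ι ℂ :=
  NormedSpace.exp ((Complex.I * (t : ℂ)) • R.map (Complex.ofReal ·))

/-- Applying a matrix exponential to a vector via an invariant "embedding". -/
lemma exp_mulVec_comm {n n' : Type*} [Fintype n] [DecidableEq n] [Fintype n'] [DecidableEq n']
    (A : Matrix n' n' ℂ) (P : Matrix n n ℂ) (ι : (n → ℂ) →ₗ[ℂ] (n' → ℂ))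
    (v : n → ℂ) (h : ∀ k : ℕ, A ^ k *ᵥ ι v = ι (P ^ k *ᵥ v)) :
    NormedSpace.exp A *ᵥ ι v = ι (NormedSpace.exp P *ᵥ v) := by
  classical
  letI : NormedRing (Matrix n' n' ℂ) := Matrix.linftyOpNormedRing
  letI : NormedAlgebra ℂ (Matrix n' n' ℂ) := Matrix.linftyOpNormedAlgebra
  letI : NormedRing (Matrix n n ℂ) := Matrix.linftyOpNormedRing
  letI : NormedAlgebra ℂ (Matrix n n ℂ) := Matrix.linftyOpNormedAlgebra
  let φ : Matrix n' n' ℂ →ₗ[ℂ] (n' → ℂ) :=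
    { toFun := fun M => M *ᵥ ι v
      map_add' := fun M M' => Matrix.add_mulVec M M' (ι v)
      map_smul' := fun a M => Matrix.smul_mulVec a M (ι v) }
  let ψ : Matrix n n ℂ →ₗ[ℂ] (n' → ℂ) :=
    { toFun := fun M => ι (M *ᵥ v)
      map_add' := fun M M' => by simp [Matrix.add_mulVec]
      map_smul' := fun a M => by simp [Matrix.smul_mulVec] }
  have hφ : Continuous φ := φ.continuous_of_finiteDimensional
  have hψ : Continuous ψ := ψ.continuous_of_finiteDimensional
  have hA : Summable fun k : ℕ => (((k.factorial : ℂ))⁻¹) • A ^ k :=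
    NormedSpace.expSeries_summable' (𝕂 := ℂ) A
  have hP : Summable fun k : ℕ => (((k.factorial : ℂ))⁻¹) • P ^ k :=
    NormedSpace.expSeries_summable' (𝕂 := ℂ) P
  have e1 : NormedSpace.exp A *ᵥ ι v = φ (NormedSpace.exp A) := rfl
  have e2 : ι (NormedSpace.exp P *ᵥ v) = ψ (NormedSpace.exp P) := rfl
  rw [e1, e2, NormedSpace.exp_eq_tsum ℂ, NormedSpace.exp_eq_tsum ℂ]
  calc φ (∑' k : ℕ, ((k.factorial : ℂ))⁻¹ • A ^ k)
      = ∑' k : ℕ, φ (((k.factorial : ℂ))⁻¹ • A ^ k) := (hA.hasSum.map φ.toAddMonoidHom hφ).tsum_eq.symm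
    _ = ∑' k : ℕ, ψ (((k.factorial : ℂ))⁻¹ • P ^ k) := by
        refine tsum_congr fun k => ?_
        show φ _ = ψ _
        rw [_root_.map_smul, _root_.map_smul]
        show _ • (A ^ k *ᵥ ι v) = _ • ι (P ^ k *ᵥ v)
        rw [h k]
    _ = ψ (∑' k : ℕ, ((k.factorial : ℂ))⁻¹ • P ^ k) := (hP.hasSum.map ψ.toAddMonoidHom hψ).tsum_eq

/-- Let `L₁, L₂` be Laplacians of graphs on `c` and `m` vertices and
`N = [[L₁ + m·I, −J], [−Jᵀ, L₂ + c·I]]` the Laplacian of their join. If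
`𝟙ᵀx = 𝟙ᵀy = 0` and `exp(iτL₁)·x = γ·y` with `τ > 0`, `|γ| = 1`, then with
`γ' = e^{imτ}·γ` (which is unimodular) we have `exp(iτN)·(x,0) = γ'·(y,0)`. -/
theorem stmt10 (c m : ℕ)
    (G₁ : SimpleGraph (Fin c)) [DecidableRel G₁.Adj]
    (G₂ : SimpleGraph (Fin m)) [DecidableRel G₂.Adj]
    (L₁ : Matrix (Fin c) (Fin c) ℝ) (hL₁ : L₁ = G₁.lapMatrix ℝ)
    (L₂ : Matrix (Fin m) (Fin m) ℝ) (hL₂ : L₂ = G₂.lapMatrix ℝ)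
    (N : Matrix (Fin c ⊕ Fin m) (Fin c ⊕ Fin m) ℝ)
    (hN : N = Matrix.fromBlocks
      (L₁ + (m : ℝ) • (1 : Matrix (Fin c) (Fin c) ℝ))
      (-(Matrix.of fun (_ : Fin c) (_ : Fin m) => (1 : ℝ)))
      (-(Matrix.of fun (_ : Fin c) (_ : Fin m) => (1 : ℝ))ᵀ)
      (L₂ + (c : ℝ) • (1 : Matrix (Fin m) (Fin m) ℝ)))
    (x y : Fin c → ℝ) (hx : ∑ i, x i = 0) (hy : ∑ i, y i = 0)
    (τ : ℝ) (hτ : 0 < τ) (γ : ℂ) (hγ : ‖γ‖ = 1)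
    (hPST : U L₁ τ *ᵥ (fun i => (x i : ℂ)) = γ • fun i => (y i : ℂ)) :
    ∃ γ' : ℂ, γ' = Complex.exp (Complex.I * m * τ) * γ ∧ ‖γ'‖ = 1 ∧
      U N τ *ᵥ Sum.elim (fun i => (x i : ℂ)) 0 =
        γ' • Sum.elim (fun i => (y i : ℂ)) 0 := by
  classical
  refine ⟨Complex.exp (Complex.I * m * τ) * γ, rfl, ?_, ?_⟩
  · rw [norm_mul, hγ, mul_one, Complex.norm_exp]
    simp [Complex.mul_re, Complex.mul_im]
  · set xC : Fin c → ℂ := fun i => (x i : ℂ) with hxC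
    set yC : Fin c → ℂ := fun i => (y i : ℂ) with hyC
    set z : ℂ := Complex.I * m * τ with hz
    let ι : (Fin c → ℂ) →ₗ[ℂ] (Fin c ⊕ Fin m → ℂ) :=
      { toFun := fun v => Sum.elim v 0
        map_add' := fun v w => by funext s; cases s <;> simp
        map_smul' := fun a v => by funext s; cases s <;> simp }
    set Pc : Matrix (Fin c) (Fin c) ℂ :=
      (L₁ + (m : ℝ) • (1 : Matrix (Fin c) (Fin c) ℝ)).map (Complex.ofReal ·) with hPc
    set Nc : Matrix (Fin c ⊕ Fin m) (Fin c ⊕ Fin m) ℂ := N.map (Complex.ofReal ·) with hNc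
    set A : Matrix (Fin c ⊕ Fin m) (Fin c ⊕ Fin m) ℂ := (Complex.I * (τ : ℂ)) • Nc with hA
    set P : Matrix (Fin c) (Fin c) ℂ := (Complex.I * (τ : ℂ)) • Pc with hP
    have colsum : ∀ j, ∑ i, (L₁ i j : ℂ) = 0 := by
      intro j
      have hsym := (G₁.isSymm_lapMatrix (R := ℝ)).apply
      have hrow := congrFun (G₁.lapMatrix_mulVec_const_eq_zero (R := ℝ)) j
      simp only [Matrix.mulVec, dotProduct, mul_one, Pi.zero_apply] at hrow
      have : ∑ i, L₁ i j = 0 := by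
        rw [hL₁]
        calc ∑ i, G₁.lapMatrix ℝ i j = ∑ i, G₁.lapMatrix ℝ j i :=
              Finset.sum_congr rfl fun i _ => hsym j i
          _ = 0 := hrow
      rw [← Complex.ofReal_sum] at *
      push_cast
      rw [← Complex.ofReal_sum, this, Complex.ofReal_zero]
    have step0 : ∀ v : Fin c → ℂ, (∑ i, v i = 0) → Nc *ᵥ ι v = ι (Pc *ᵥ v) := by
      intro v hv
      have : (ι v : Fin c ⊕ Fin m → ℂ) = Sum.elim v 0 := rfl
      rw [this, hNc, hN, Matrix.fromBlocks_map, Matrix.fromBlocks_mulVec]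
      have h2 : ((-(Matrix.of fun (_ : Fin c) (_ : Fin m) => (1 : ℝ))ᵀ).map
          (Complex.ofReal ·)) *ᵥ v = 0 := by
        funext j
        simp only [Matrix.mulVec, dotProduct, Matrix.map_apply, Matrix.transpose_apply,
          Matrix.neg_apply, Matrix.of_apply, Pi.zero_apply, Complex.ofReal_neg,
          Complex.ofReal_one, neg_mul, one_mul]
        rw [Finset.sum_neg_distrib, hv, neg_zero]
      show Sum.elim _ _ = Sum.elim (Pc *ᵥ v) 0
      rw [Sum.elim_comp_inl, Sum.elim_comp_inr, Matrix.mulVec_zero, Matrix.mulVec_zero,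
        add_zero, add_zero, h2]
    have sum0 : ∀ v : Fin c → ℂ, (∑ i, v i = 0) → ∑ i, (Pc *ᵥ v) i = 0 := by
      intro v hv
      have expand : ∀ i j, Pc i j = (L₁ i j : ℂ) + (m : ℂ) * (if i = j then 1 else 0) := by
        intro i j
        rw [hPc, Matrix.map_apply]
        simp only [Matrix.add_apply, Matrix.smul_apply, Matrix.one_apply, smul_eq_mul,
          Complex.ofReal_add, Complex.ofReal_mul, apply_ite (Complex.ofReal ·),
          Complex.ofReal_one, Complex.ofReal_zero, Complex.ofReal_natCast]
      calc ∑ i, (Pc *ᵥ v) i = ∑ j, ∑ i, Pc i j * v j := by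
            simp only [Matrix.mulVec, dotProduct]; rw [Finset.sum_comm]
        _ = ∑ j, ((m : ℂ) * v j + (∑ i, (L₁ i j : ℂ)) * v j) := by
            refine Finset.sum_congr rfl fun j _ => ?_
            simp_rw [expand, add_mul]
            rw [Finset.sum_add_distrib, ← Finset.sum_mul]
            simp_rw [mul_ite, ite_mul, mul_one, mul_zero, zero_mul]
            rw [Finset.sum_ite_eq' Finset.univ j fun _ => (m : ℂ) * v j]
            simp [add_comm]
        _ = 0 := by
            rw [Finset.sum_add_distrib, ← Finset.mul_sum, hv, mul_zero, zero_add]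
            exact Finset.sum_eq_zero fun j _ => by rw [colsum j, zero_mul]
    have stepA : ∀ v : Fin c → ℂ, (∑ i, v i = 0) → A *ᵥ ι v = ι (P *ᵥ v) := by
      intro v hv
      rw [hA, hP, Matrix.smul_mulVec, Matrix.smul_mulVec, step0 v hv, ← ι.map_smul]
    have sumP : ∀ v : Fin c → ℂ, (∑ i, v i = 0) → ∑ i, (P *ᵥ v) i = 0 := by
      intro v hv
      rw [hP, Matrix.smul_mulVec]
      simp only [Pi.smul_apply, smul_eq_mul, ← Finset.mul_sum, sum0 v hv, mul_zero]
    have hxsum : ∑ i, xC i = 0 := by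
      rw [hxC, ← Complex.ofReal_sum, hx, Complex.ofReal_zero]
    have hpow : ∀ k : ℕ, A ^ k *ᵥ ι xC = ι (P ^ k *ᵥ xC) ∧ ∑ i, (P ^ k *ᵥ xC) i = 0 := by
      intro k
      induction k with
      | zero => simp [Matrix.one_mulVec, hxsum]
      | succ k ih =>
        obtain ⟨ih1, ih2⟩ := ih
        constructor
        · rw [pow_succ', pow_succ', ← Matrix.mulVec_mulVec, ← Matrix.mulVec_mulVec, ih1,
            stepA _ ih2]
        · rw [pow_succ', ← Matrix.mulVec_mulVec]
          exact sumP _ ih2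
    have key : U N τ *ᵥ ι xC = ι (NormedSpace.exp P *ᵥ xC) :=
      exp_mulVec_comm A P ι xC fun k => (hpow k).1
    have hPdecomp : P = (Complex.I * (τ : ℂ)) • (L₁.map (Complex.ofReal ·))
        + z • (1 : Matrix (Fin c) (Fin c) ℂ) := by
      ext i j
      simp only [hP, hPc, hz, Matrix.add_apply, Matrix.smul_apply, Matrix.map_apply,
        Matrix.one_apply, smul_eq_mul]
      split <;> push_cast <;> ring
    have hcomm : Commute ((Complex.I * (τ : ℂ)) • (L₁.map (Complex.ofReal ·)))
        (z • (1 : Matrix (Fin c) (Fin c) ℂ)) :=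
      (Commute.one_right _).smul_right z
    have hexpz : NormedSpace.exp (z • (1 : Matrix (Fin c) (Fin c) ℂ))
        = Complex.exp z • (1 : Matrix (Fin c) (Fin c) ℂ) := by
      letI : NormedRing (Matrix (Fin c) (Fin c) ℂ) := Matrix.linftyOpNormedRing
      letI : NormedAlgebra ℂ (Matrix (Fin c) (Fin c) ℂ) := Matrix.linftyOpNormedAlgebra
      rw [← Algebra.algebraMap_eq_smul_one]
      have h := NormedSpace.algebraMap_exp_comm (𝔸 := Matrix (Fin c) (Fin c) ℂ) z
      rw [← Complex.exp_eq_exp_ℂ, Algebra.algebraMap_eq_smul_one] at h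
      exact h.symm
    have hexpP : NormedSpace.exp P
        = NormedSpace.exp ((Complex.I * (τ : ℂ)) • (L₁.map (Complex.ofReal ·)))
          * (Complex.exp z • (1 : Matrix (Fin c) (Fin c) ℂ)) := by
      rw [hPdecomp, Matrix.exp_add_of_commute _ _ hcomm, hexpz]
    have hUe : U L₁ τ = NormedSpace.exp ((Complex.I * (τ : ℂ)) • (L₁.map (Complex.ofReal ·))) :=
      rfl
    have final : NormedSpace.exp P *ᵥ xC = (Complex.exp z * γ) • yC := by
      rw [hexpP, ← Matrix.mulVec_mulVec]
      have : (Complex.exp z • (1 : Matrix (Fin c) (Fin c) ℂ)) *ᵥ xC = Complex.exp z • xC := by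
        rw [Matrix.smul_mulVec, Matrix.one_mulVec]
      rw [this, Matrix.mulVec_smul, ← hUe, hPST, smul_smul]
    show U N τ *ᵥ ι xC = (Complex.exp z * γ) • ι yC
    rw [key, final, ι.map_smul]
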